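/- For unitaries U_1,…,U_d and V_1,…,V_d on C^{d²} and a fixed vector |0⟩, the supermap E ↦ Tr_2(V((E⊗I)(U((·)⊗|0⟩⟨0|)U†))V†), with U = Σ_i |i⟩⟨i|⊗U_i and V = Σ_i |i⟩⟨i|⊗V_i, acts on Jamiołkowski matrices by J(E) ↦ J(E) ∘ C where C_{ik,jl} = ⟨0|U_l† V_j† V_i U_k|0⟩. -/

import Mathlib

open Matrix
open scoped Kronecker ComplexOrder

noncomputable section

/-- The Schur-product (Hadamard-product) superoperator `X ↦ X ∘ C`. -/
def schurMap {d : ℕ} (C : Matrix (Fin d) (Fin d) ℂ) :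
    Matrix (Fin d) (Fin d) ℂ →ₗ[ℂ] Matrix (Fin d) (Fin d) ℂ where
  toFun X := X.hadamard C
  map_add' X Y := by ext i j; simp [Matrix.hadamard]; ring
  map_smul' c X := by ext i j; simp [Matrix.hadamard]; ring

/-- The extension `E ⊗ I_n` of a superoperator, applied to a bipartite matrix. -/
def tensExt {d : ℕ} (E : Matrix (Fin d) (Fin d) ℂ →ₗ[ℂ] Matrix (Fin d) (Fin d) ℂ) (n : ℕ)
    (ρ : Matrix (Fin d × Fin n) (Fin d × Fin n) ℂ) :
    Matrix (Fin d × Fin n) (Fin d × Fin n) ℂ :=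
  Matrix.of fun p q => ∑ i, ∑ j, (E (Matrix.single i j 1)) p.1 q.1 * ρ (i, p.2) (j, q.2)

/-- Complete positivity: every extension `E ⊗ I_n` preserves positive semidefiniteness. -/
def IsCP {d : ℕ} (E : Matrix (Fin d) (Fin d) ℂ →ₗ[ℂ] Matrix (Fin d) (Fin d) ℂ) : Prop :=
  ∀ (n : ℕ) (ρ : Matrix (Fin d × Fin n) (Fin d × Fin n) ℂ),
    ρ.PosSemidef → (tensExt E n ρ).PosSemidef

/-- Trace preservation. -/
def IsTP {d : ℕ} (E : Matrix (Fin d) (Fin d) ℂ →ₗ[ℂ] Matrix (Fin d) (Fin d) ℂ) : Prop :=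
  ∀ X, (E X).trace = X.trace

/-- Quantum channel: completely positive and trace-preserving. -/
def IsCPTP {d : ℕ} (E : Matrix (Fin d) (Fin d) ℂ →ₗ[ℂ] Matrix (Fin d) (Fin d) ℂ) : Prop :=
  IsCP E ∧ IsTP E

/-- The Jamiołkowski matrix `J(E) = (E ⊗ I)(|Ψ⟩⟨Ψ|)`, with entries
`J(E)_{(i,k),(j,l)} = E(|k⟩⟨l|)_{i j} / d`. -/
def jam {d : ℕ} (E : Matrix (Fin d) (Fin d) ℂ →ₗ[ℂ] Matrix (Fin d) (Fin d) ℂ) :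
    Matrix (Fin d × Fin d) (Fin d × Fin d) ℂ :=
  Matrix.of fun p q => (E (Matrix.single p.2 q.2 1)) p.1 q.1 / d

/-- Controlled unitary `U = Σ_i |i⟩⟨i| ⊗ U_i`. -/
def ctrl {d n : ℕ} (Us : Fin d → Matrix (Fin n) (Fin n) ℂ) :
    Matrix (Fin d × Fin n) (Fin d × Fin n) ℂ :=
  Matrix.of fun p q => (if p.1 = q.1 then (1 : ℂ) else 0) * (Us p.1) p.2 q.2


lemma L1 {d n : ℕ} (Us : Fin d → Matrix (Fin n) (Fin n) ℂ) (v : Fin n → ℂ)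
    (k l : Fin d) (a b : Fin d) (x y : Fin n) :
    (ctrl Us * ((Matrix.single k l (1:ℂ)) ⊗ₖ vecMulVec v (star v)) * (ctrl Us)ᴴ) (a,x) (b,y)
      = Matrix.single k l (1:ℂ) a b * ((Us a *ᵥ v) x * star ((Us b *ᵥ v) y)) := by
  simp only [Matrix.mul_apply, ctrl, conjTranspose_apply, Matrix.of_apply,
    kroneckerMap_apply, vecMulVec_apply, Fintype.sum_prod_type, mulVec, dotProduct,
    Pi.star_apply, star_mul', Matrix.single, ite_mul, one_mul, zero_mul,
    Finset.sum_ite_eq, Finset.sum_ite_eq', Finset.mem_univ, if_true]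
  simp only [mul_ite, mul_zero, ite_and, star_zero, Finset.sum_ite_irrel, Finset.sum_const_zero, apply_ite, Finset.sum_ite_eq,
    Finset.sum_ite_eq', Finset.mem_univ, if_true]
  split_ifs <;>
    simp [Finset.sum_mul, Finset.mul_sum, star_sum, mul_comm, mul_left_comm, mul_assoc, *]


lemma L2 {d : ℕ} {n : ℕ} (E : Matrix (Fin d) (Fin d) ℂ →ₗ[ℂ] Matrix (Fin d) (Fin d) ℂ)
    (Us : Fin d → Matrix (Fin n) (Fin n) ℂ) (v : Fin n → ℂ)
    (k l : Fin d) (c e : Fin d) (x y : Fin n) :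
    tensExt E n (ctrl Us * ((Matrix.single k l (1:ℂ)) ⊗ₖ vecMulVec v (star v)) * (ctrl Us)ᴴ)
        (c,x) (e,y)
      = E (Matrix.single k l 1) c e * ((Us k *ᵥ v) x * star ((Us l *ᵥ v) y)) := by
  simp only [tensExt, Matrix.of_apply, L1]
  simp only [Matrix.single, Matrix.of_apply, ite_mul, one_mul, zero_mul, mul_ite, mul_zero,
    ite_and, Finset.sum_ite_irrel, Finset.sum_const_zero, Finset.sum_ite_eq, Finset.mem_univ,
    if_true]


/-- the supermap built from controlled unitaries `U = Σ|i⟩⟨i|⊗U_i`,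
`V = Σ|i⟩⟨i|⊗V_i` (ancilla of dimension `d²` prepared in `|0⟩`, discarded at the
end) acts on Jamiołkowski matrices by `J(E) ↦ J(E) ∘ C` with
`C_{ik,jl} = ⟨0|U_l† V_j† V_i U_k|0⟩`. -/
theorem stmt10 (d : ℕ) (Us Vs : Fin d → Matrix (Fin (d * d)) (Fin (d * d)) ℂ)
    (hU : ∀ i, Us i ∈ Matrix.unitaryGroup (Fin (d * d)) ℂ)
    (hV : ∀ i, Vs i ∈ Matrix.unitaryGroup (Fin (d * d)) ℂ)
    (v : Fin (d * d) → ℂ) (hv : ∑ x, star (v x) * v x = 1)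
    (E : Matrix (Fin d) (Fin d) ℂ →ₗ[ℂ] Matrix (Fin d) (Fin d) ℂ) (hE : IsCPTP E) :
    (Matrix.of fun p q : Fin d × Fin d =>
        (∑ m, (ctrl Vs *
            tensExt E (d * d)
              (ctrl Us * ((Matrix.single p.2 q.2 1) ⊗ₖ vecMulVec v (star v)) *
                (ctrl Us)ᴴ) *
            (ctrl Vs)ᴴ) (p.1, m) (q.1, m)) / d) =
      (jam E).hadamard
        (Matrix.of fun p q : Fin d × Fin d =>
          star v ⬝ᵥ (((Us q.2)ᴴ * (Vs q.1)ᴴ * Vs p.1 * Us p.2) *ᵥ v)) := by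
  clear hU hV hv hE
  ext p q
  simp only [Matrix.of_apply, Matrix.hadamard_apply, jam]
  simp only [Matrix.mul_apply, Fintype.sum_prod_type, L2]
  simp only [ctrl, Matrix.of_apply, conjTranspose_apply, ite_mul, one_mul, zero_mul,
    mul_ite, mul_zero, star_zero, apply_ite (star : ℂ → ℂ), Finset.sum_ite_irrel, Finset.sum_const_zero,
    Finset.sum_ite_eq, Finset.sum_ite_eq', Finset.mem_univ, if_true]
  have key : ∑ x, (Vs p.1 *ᵥ (Us p.2 *ᵥ v)) x * star ((Vs q.1 *ᵥ (Us q.2 *ᵥ v)) x)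
      = star v ⬝ᵥ ((Us q.2)ᴴ * (Vs q.1)ᴴ * Vs p.1 * Us p.2) *ᵥ v := by
    calc ∑ x, (Vs p.1 *ᵥ (Us p.2 *ᵥ v)) x * star ((Vs q.1 *ᵥ (Us q.2 *ᵥ v)) x)
        = star ((Vs q.1 * Us q.2) *ᵥ v) ⬝ᵥ ((Vs p.1 * Us p.2) *ᵥ v) := by
          simp [dotProduct, mulVec_mulVec, mul_comm]
      _ = (star v ᵥ* (Vs q.1 * Us q.2)ᴴ) ⬝ᵥ ((Vs p.1 * Us p.2) *ᵥ v) := by rw [star_mulVec]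
      _ = star v ⬝ᵥ ((Us q.2)ᴴ * (Vs q.1)ᴴ * Vs p.1 * Us p.2) *ᵥ v := by
          rw [← dotProduct_mulVec, mulVec_mulVec, conjTranspose_mul]
          simp [mul_assoc]
  rw [← key]
  rw [div_eq_mul_inv, div_eq_mul_inv, Finset.mul_sum, Finset.sum_mul]
  refine Finset.sum_congr rfl fun i _ => ?_
  simp [mulVec, dotProduct, star_sum, star_mul', Finset.sum_mul, Finset.mul_sum,
    mul_comm, mul_left_comm, mul_assoc]


end
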